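/- Let a₁, a₂ ∈ ℍ with ‖a₁‖ < 1 and ‖a₂‖ < 1, and let u₁, u₂ ∈ ℍ with ‖u₁‖ = ‖u₂‖ = 1. Suppose there exists q ∈ ℍ with ‖q‖ < 1 such that 𝓕_{a₁}(q)·u₁ = 0 and 𝓕_{a₂}(q)·u₂ = 0. Then a₁ = a₂ = q, and there exists u ∈ ℍ with ‖u‖ = 1 such that 𝓕_{a₁}(p)·u₁ = (𝓕_{a₂}(p)·u₂)·u for every p ∈ ℍ with ‖p‖ < 1. -/

import Mathlib

lemma qcoe_smul_one (r : ℝ) : (r : Quaternion ℝ) = r • (1 : Quaternion ℝ) := by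
  rw [← Quaternion.coe_one, Quaternion.smul_coe, mul_one]

lemma abs_re_le_norm' (a : Quaternion ℝ) : |a.re| ≤ ‖a‖ := by
  have h1 : Quaternion.normSq a = ‖a‖ * ‖a‖ := Quaternion.normSq_eq_norm_mul_self a
  have h2 : Quaternion.normSq a = a.re^2 + a.imI^2 + a.imJ^2 + a.imK^2 :=
    Quaternion.normSq_def' a
  nlinarith [abs_nonneg a.re, norm_nonneg a, sq_abs a.re, sq_nonneg a.imI, sq_nonneg a.imJ,
    sq_nonneg a.imK]

lemma sq_eq' (q : Quaternion ℝ) :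
    q^2 = (2*q.re) • q - ((Quaternion.normSq q : ℝ) : Quaternion ℝ) := by
  have hs : star q = ((2 * q.re : ℝ) : Quaternion ℝ) - q := Quaternion.star_eq_two_re_sub q
  have h := Quaternion.self_mul_star (a := q)
  rw [hs, mul_sub, Quaternion.mul_coe_eq_smul] at h
  rw [sq]
  linear_combination (norm := module) -h

lemma denom_ne_zero (a q : Quaternion ℝ) (ha : ‖a‖ < 1) (hq : ‖q‖ < 1) :
    ‖a‖ ^ 2 • q ^ 2 - (2 * a.re) • q + 1 ≠ 0 := by
  intro h0
  rw [sq_eq' q] at h0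
  have hns : (Quaternion.normSq q : ℝ) = ‖q‖^2 := by
    rw [Quaternion.normSq_eq_norm_mul_self]; ring
  set c : ℝ := ‖a‖^2 * (2*q.re) - 2*a.re with hc
  set d : ℝ := 1 - ‖a‖^2 * ‖q‖^2 with hd
  have haq : ‖a‖ * ‖q‖ < 1 := by nlinarith [norm_nonneg a, norm_nonneg q]
  have hd0 : 0 < d := by nlinarith [mul_nonneg (norm_nonneg a) (norm_nonneg q)]
  have key : c • q + d • (1 : Quaternion ℝ) = 0 := by
    rw [hns, qcoe_smul_one] at h0
    rw [hc, hd]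
    linear_combination (norm := module) h0
  have hre : c * q.re + d = 0 := by simpa [Quaternion.re_one, Quaternion.re_zero] using congrArg QuaternionAlgebra.re key
  have hiI : c * q.imI = 0 := by simpa [Quaternion.imI_one, Quaternion.imI_zero] using congrArg QuaternionAlgebra.imI key
  have hiJ : c * q.imJ = 0 := by simpa [Quaternion.imJ_one, Quaternion.imJ_zero] using congrArg QuaternionAlgebra.imJ key
  have hiK : c * q.imK = 0 := by simpa [Quaternion.imK_one, Quaternion.imK_zero] using congrArg QuaternionAlgebra.imK key
  by_cases hc0 : c = 0
  · rw [hc0, zero_mul, zero_add] at hre; linarith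
  · have hI : q.imI = 0 := by rcases mul_eq_zero.1 hiI with h|h; exact absurd h hc0; exact h
    have hJ : q.imJ = 0 := by rcases mul_eq_zero.1 hiJ with h|h; exact absurd h hc0; exact h
    have hK : q.imK = 0 := by rcases mul_eq_zero.1 hiK with h|h; exact absurd h hc0; exact h
    set r : ℝ := q.re with hr
    have hq2 : ‖q‖^2 = r^2 := by
      rw [← hns, Quaternion.normSq_def', hI, hJ, hK]; ring
    have hE : ‖a‖^2 * r^2 - 2*a.re*r + 1 = 0 := by
      rw [hq2] at hd
      rw [hc, hd] at hre
      nlinarith [hre]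
    have hr1 : r^2 < 1 := by rw [← hq2]; nlinarith [norm_nonneg q]
    have habs : |r| < 1 := by nlinarith [sq_abs r, abs_nonneg r]
    have h3 : 2*a.re*r ≤ 2*‖a‖*|r| := by
      have := le_abs_self (a.re*r)
      have h5 := mul_le_mul_of_nonneg_right (abs_re_le_norm' a) (abs_nonneg r)
      rw [abs_mul] at this
      nlinarith
    have h4 : ‖a‖*|r| < 1 := by nlinarith [norm_nonneg a, abs_nonneg r]
    have hX : ‖a‖^2*|r|^2 = ‖a‖^2*r^2 := by rw [sq_abs]
    nlinarith [sq_nonneg (‖a‖*|r| - 1), hE, h3, h4, hX]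

lemma num_zero (a q : Quaternion ℝ) (ha : ‖a‖ < 1) (hq : ‖q‖ < 1)
    (h : q ^ 2 * a - q * (a ^ 2 + 1) + a = 0) : a = q := by
  have hfac : q * (q - a) * a = q - a := by
    have e : q * (q - a) * a - (q - a) = q ^ 2 * a - q * (a ^ 2 + 1) + a := by noncomm_ring
    have := e.trans h
    linear_combination (norm := noncomm_ring) this
  by_contra hne
  have hqa : q - a ≠ 0 := sub_ne_zero.mpr (fun hh => hne hh.symm)
  have hn := congrArg (‖·‖) hfac
  simp only [norm_mul] at hn
  have hpos : 0 < ‖q - a‖ := norm_pos_iff.mpr hqa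
  have h1 : ‖q‖ * ‖a‖ < 1 := by nlinarith [norm_nonneg q, norm_nonneg a]
  nlinarith [hn, hpos, h1, mul_pos hpos (sub_pos.mpr h1)]

/-- The regular Möbius transformation `𝓕_a` in its explicit rational form. -/
noncomputable def regularMobius (a q : Quaternion ℝ) : Quaternion ℝ :=
  (‖a‖ ^ 2 • q ^ 2 - (2 * a.re) • q + 1)⁻¹ * (q ^ 2 * a - q * (a ^ 2 + 1) + a)

lemma num_zero_of_mobius (a u q : Quaternion ℝ) (ha : ‖a‖ < 1) (hu : ‖u‖ = 1)
    (hq : ‖q‖ < 1) (h : regularMobius a q * u = 0) : a = q := by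
  have hu0 : u ≠ 0 := by intro hh; rw [hh, norm_zero] at hu; norm_num at hu
  have hD := denom_ne_zero a q ha hq
  have hF : regularMobius a q = 0 := by
    rcases mul_eq_zero.1 h with hh | hh
    · exact hh
    · exact absurd hh hu0
  have hN : q ^ 2 * a - q * (a ^ 2 + 1) + a = 0 := by
    unfold regularMobius at hF
    rcases mul_eq_zero.1 hF with hh | hh
    · exact absurd hh (inv_ne_zero hD)
    · exact hh
  exact num_zero a q ha hq hN

/-- two regular Möbius transformations of `𝔹` vanishing at a common point `q ∈ 𝔹`
have `a₁ = a₂ = q` and differ by right multiplication by a unit quaternion. -/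
theorem regularMobius_common_zero (a₁ a₂ u₁ u₂ : Quaternion ℝ)
    (ha₁ : ‖a₁‖ < 1) (ha₂ : ‖a₂‖ < 1) (hu₁ : ‖u₁‖ = 1) (hu₂ : ‖u₂‖ = 1)
    (q : Quaternion ℝ) (hq : ‖q‖ < 1)
    (h₁ : regularMobius a₁ q * u₁ = 0) (h₂ : regularMobius a₂ q * u₂ = 0) :
    a₁ = q ∧ a₂ = q ∧ ∃ u : Quaternion ℝ, ‖u‖ = 1 ∧
      ∀ p : Quaternion ℝ, ‖p‖ < 1 →
        regularMobius a₁ p * u₁ = (regularMobius a₂ p * u₂) * u := by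
  have e₁ : a₁ = q := num_zero_of_mobius a₁ u₁ q ha₁ hu₁ hq h₁
  have e₂ : a₂ = q := num_zero_of_mobius a₂ u₂ q ha₂ hu₂ hq h₂
  refine ⟨e₁, e₂, u₂⁻¹ * u₁, ?_, ?_⟩
  · rw [norm_mul, norm_inv, hu₁, hu₂]; norm_num
  · intro p hp
    have hu20 : u₂ ≠ 0 := by intro hh; rw [hh, norm_zero] at hu₂; norm_num at hu₂
    rw [e₁, e₂, mul_assoc, ← mul_assoc u₂, mul_inv_cancel₀ hu20, one_mul]
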